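/- Let θ ∈ (0,1], a > 1 and b > 0, and let f(s) = 1 − (a·(1−s)^{−θ} + b)^{−1/θ}. Then lim_{n→∞} a^{n/θ}·(1 − f^{∘n}(0)) = ((a−1)/(a+b−1))^{1/θ}. In other words, the survival probability P(Z_n > 0) = 1 − f^{∘n}(0) of a subcritical Galton–Watson process with one ancestor and offspring law PF(θ,a,b) satisfies a^{n/θ}·P(Z_n > 0) → ((a−1)/(a+b−1))^{1/θ}. -/

import Mathlib

/-- in the subcritical case `a > 1`, the survival probabilities
`P(Z_n > 0) = 1 - f^[n](0)` of the Galton-Watson process with offspring law `PF(θ,a,b)`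
satisfy `a^(n/θ) (1 - f^[n](0)) → ((a-1)/(a+b-1))^(1/θ)`. -/
theorem pf_subcritical_survival (θ a b : ℝ) (hθ : θ ∈ Set.Ioc (0:ℝ) 1)
    (ha : 1 < a) (hb : 0 < b) (f : ℝ → ℝ)
    (hf : ∀ s, f s = 1 - (a * (1 - s) ^ (-θ) + b) ^ (-1/θ)) :
    Filter.Tendsto (fun n : ℕ => a ^ ((n : ℝ) / θ) * (1 - f^[n] 0)) Filter.atTop
      (nhds (((a - 1) / (a + b - 1)) ^ (1/θ))) := by
  obtain ⟨hθ0, hθ1⟩ := hθ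
  have hθne : θ ≠ 0 := ne_of_gt hθ0
  have ha0 : (0:ℝ) < a := lt_trans one_pos ha
  have ha1 : (0:ℝ) < a - 1 := by linarith
  set c : ℕ → ℝ := fun n => a ^ n + b * (a ^ n - 1) / (a - 1) with hc
  have hcpos : ∀ n, 0 < c n := by
    intro n
    have h1 : (1:ℝ) ≤ a ^ n := one_le_pow₀ (le_of_lt ha)
    have h2 : 0 ≤ b * (a ^ n - 1) / (a - 1) :=
      div_nonneg (mul_nonneg hb.le (by linarith)) (by linarith)
    simp only [hc]
    nlinarith
  have key : ∀ n, 1 - f^[n] 0 = (c n) ^ (-1/θ) := by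
    intro n
    induction n with
    | zero => simp [hc]
    | succ n ih =>
      rw [Function.iterate_succ_apply', hf, ih]
      have hcn := hcpos n
      rw [show ((c n) ^ (-1/θ) : ℝ) ^ (-θ) = c n from by
        rw [← Real.rpow_mul hcn.le, show (-1/θ) * (-θ) = 1 by field_simp,
          Real.rpow_one]]
      rw [sub_sub_cancel]
      congr 1
      simp only [hc]
      field_simp
      ring
  have heq : ∀ n : ℕ, a ^ ((n : ℝ) / θ) * (1 - f^[n] 0)
      = ((a - 1) / ((a - 1) + b * (1 - (a⁻¹) ^ n))) ^ (1/θ) := by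
    intro n
    rw [key n]
    have hcn := hcpos n
    have hpa : (0:ℝ) < a ^ n := pow_pos ha0 n
    have h1 : a ^ ((n : ℝ) / θ) = (a ^ n : ℝ) ^ (1/θ) := by
      rw [← Real.rpow_natCast a n, ← Real.rpow_mul ha0.le]
      congr 1
      field_simp
    have h2 : (c n) ^ (-1/θ) = ((c n) ^ (1/θ))⁻¹ := by
      rw [show (-1/θ) = -(1/θ) by ring, Real.rpow_neg hcn.le]
    rw [h1, h2, inv_pow, ← div_eq_mul_inv, ← Real.div_rpow hpa.le hcn.le]
    congr 1
    have hane : (a:ℝ) ^ n ≠ 0 := ne_of_gt hpa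
    have htpos : (0:ℝ) < (a - 1) + b * (1 - (a ^ n)⁻¹) := by
      have : (a ^ n)⁻¹ ≤ 1 := by
        rw [inv_le_one_iff₀]; right; exact one_le_pow₀ (le_of_lt ha)
      nlinarith [mul_nonneg hb.le (sub_nonneg.mpr this)]
    rw [div_eq_div_iff (ne_of_gt hcn) (ne_of_gt htpos)]
    simp only [hc]
    field_simp
  have habpos : (0:ℝ) < a + b - 1 := by linarith
  have hlim : Filter.Tendsto (fun n : ℕ => (a⁻¹) ^ n) Filter.atTop (nhds 0) := by
    apply tendsto_pow_atTop_nhds_zero_of_lt_one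
    · positivity
    · rw [inv_lt_one_iff₀]; right; exact ha
  have hlim2 : Filter.Tendsto
      (fun n : ℕ => ((a - 1) / ((a - 1) + b * (1 - (a⁻¹) ^ n))) ^ (1/θ))
      Filter.atTop (nhds (((a - 1) / (a + b - 1)) ^ (1/θ))) := by
    apply Filter.Tendsto.rpow_const
    · have : Filter.Tendsto (fun n : ℕ => (a - 1) + b * (1 - (a⁻¹) ^ n))
          Filter.atTop (nhds (a + b - 1)) := by
        have h := ((hlim.const_sub 1).const_mul b).const_add (a - 1)
        rw [show a + b - 1 = (a - 1) + b * (1 - 0) by ring]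
        exact h
      exact (tendsto_const_nhds.div this (ne_of_gt habpos))
    · left
      exact ne_of_gt (div_pos ha1 habpos)
  exact hlim2.congr (fun n => (heq n).symm)
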